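/- Let f₁,…,f_n be monotone linear functions and let σ be a counterclockwise permutation of [n] such that f^σ(x)=x for all x. Then every counterclockwise permutation μ of [n] satisfies f^μ(x)=x for all x. -/

import Mathlib

/-- A linear function `x ↦ a*x + b`. -/
structure LinFun where
  a : ℝ
  b : ℝ

namespace LinFun

/-- Evaluation of a linear function. -/
def eval (f : LinFun) (x : ℝ) : ℝ := f.a * x + f.b

/-- Composition: `h.comp g` is the linear function `x ↦ h (g x)`. -/
def comp (h g : LinFun) : LinFun := ⟨h.a * g.a, h.a * g.b + h.b⟩

/-- The identical linear function `x ↦ x`. -/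
def idf : LinFun := ⟨1, 0⟩

/-- `f` is the identical function (equivalently, its vector `(β f, 1 - α f)` is `(0,0)`,
i.e. its angle is `⊥`). -/
def IsId (f : LinFun) : Prop := f = idf

/-- The Euclidean norm of the vector `(β f, 1 - α f)` associated to `f`. -/
noncomputable def vecNorm (f : LinFun) : ℝ := Real.sqrt (f.b ^ 2 + (1 - f.a) ^ 2)

/-- The polar angle in `[0, 2π)` of the vector `(β f, 1 - α f)` associated to `f`
(meaningful only when `f` is not identical). -/
noncomputable def theta (f : LinFun) : ℝ :=
  if 0 ≤ Complex.arg ⟨f.b, 1 - f.a⟩ then Complex.arg ⟨f.b, 1 - f.a⟩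
  else Complex.arg ⟨f.b, 1 - f.a⟩ + 2 * Real.pi

end LinFun

/-- Congruence of angles modulo `2π`: `x ≡_{2π} y`. -/
def Cong (x y : ℝ) : Prop := ∃ k : ℤ, x - y = 2 * Real.pi * k

/-- The set `[t1, t2]_{2π}`. -/
def Icc2pi (t1 t2 : ℝ) : Set ℝ :=
  {θ | ∃ l1 l2 : ℝ, Cong l1 t1 ∧ Cong l2 t2 ∧ 0 ≤ l2 - l1 ∧ l2 - l1 < 2 * Real.pi ∧
    θ ∈ Set.Icc l1 l2}

/-- The set `(t1, t2)_{2π}`. -/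
def Ioo2pi (t1 t2 : ℝ) : Set ℝ :=
  {θ | ∃ l1 l2 : ℝ, Cong l1 t1 ∧ Cong l2 t2 ∧ 0 ≤ l2 - l1 ∧ l2 - l1 < 2 * Real.pi ∧
    θ ∈ Set.Ioo l1 l2}

/-- Composite of a list of linear functions: `compList [g₁, …, g_m] = g_m ∘ ⋯ ∘ g₁`. -/
def compList (L : List LinFun) : LinFun := L.foldl (fun acc g => g.comp acc) LinFun.idf

/-- The list `f_{σ(1)}, …, f_{σ(n)}` (0-indexed positions). -/
def permList {n : ℕ} (f : Fin n → LinFun) (σ : Equiv.Perm (Fin n)) : List LinFun :=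
  List.ofFn fun i => f (σ i)

/-- `f^σ = f_{σ(n)} ∘ ⋯ ∘ f_{σ(1)}`. -/
def permComp {n : ℕ} (f : Fin n → LinFun) (σ : Equiv.Perm (Fin n)) : LinFun :=
  compList (permList f σ)

/-- The composite of the functions at the (0-indexed) positions `a, a+1, …, b` of `σ`:
`f_{σ(b)} ∘ ⋯ ∘ f_{σ(a)}` (in 0-indexed notation). -/
def segComp {n : ℕ} (f : Fin n → LinFun) (σ : Equiv.Perm (Fin n)) (a b : ℕ) : LinFun :=
  compList (((permList f σ).drop a).take (b + 1 - a))

/-- The composite corresponding to the `k`-shift `σ_k` of `σ`: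
`f^{σ_k} = f_{σ(k)} ∘ ⋯ ∘ f_{σ(1)} ∘ f_{σ(n)} ∘ ⋯ ∘ f_{σ(k+1)}` (1-indexed notation). -/
def shiftComp {n : ℕ} (f : Fin n → LinFun) (σ : Equiv.Perm (Fin n)) (k : ℕ) : LinFun :=
  compList ((permList f σ).rotate k)

/-- `σ` is a minimum (optimal) permutation for `f₁, …, f_n`. -/
def IsMinimum {n : ℕ} (f : Fin n → LinFun) (σ : Equiv.Perm (Fin n)) : Prop :=
  ∀ ρ : Equiv.Perm (Fin n), (permComp f σ).b ≤ (permComp f ρ).b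

/-- `μ` belongs to the neighbourhood `N(σ)`: it is obtained from `σ` by swapping two
adjacent blocks of positions, `(l, …, m)` and `(m+1, …, r)` (0-indexed, `l ≤ m < r < n`). -/
def InNbhd {n : ℕ} (σ μ : Equiv.Perm (Fin n)) : Prop :=
  ∃ (l m r : ℕ) (_ : l ≤ m) (_ : m < r) (_ : r < n),
    (∀ i : Fin n, (i.val < l ∨ r < i.val) → μ i = σ i) ∧
    (∀ i : Fin n, ∀ _ : l ≤ i.val, ∀ _ : i.val < l + r - m,
      μ i = σ ⟨i.val + m + 1 - l, by omega⟩) ∧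
    (∀ i : Fin n, ∀ _ : l + r - m ≤ i.val, ∀ _ : i.val ≤ r,
      μ i = σ ⟨i.val + m - r, by omega⟩)

/-- `σ` is locally optimal for `f₁, …, f_n`. -/
def LocallyOptimal {n : ℕ} (f : Fin n → LinFun) (σ : Equiv.Perm (Fin n)) : Prop :=
  ∀ μ : Equiv.Perm (Fin n), InNbhd σ μ → (permComp f σ).b ≤ (permComp f μ).b

/-- `σ` is counterclockwise: ignoring the identical functions, some rotation of the sequence
of angles `θ(f_{σ(1)}), …, θ(f_{σ(n)})` is nondecreasing. -/
def Counterclockwise {n : ℕ} (f : Fin n → LinFun) (σ : Equiv.Perm (Fin n)) : Prop :=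
  ∃ c : ℕ, ∀ i j : Fin n, ¬ (f (σ i)).IsId → ¬ (f (σ j)).IsId →
    ((c ≤ i.val ∧ i ≤ j) ∨ (i ≤ j ∧ j.val < c) ∨ (c ≤ i.val ∧ j.val < c)) →
    (f (σ i)).theta ≤ (f (σ j)).theta

/-- `f₁, …, f_n` are colinear: all vectors lie on one line through the origin. -/
def Colinear {n : ℕ} (f : Fin n → LinFun) : Prop :=
  ∃ lam : ℝ, ∀ i : Fin n,
    (f i).IsId ∨ Cong ((f i).theta) lam ∨ Cong ((f i).theta) (lam + Real.pi)

/-- `f₁, …, f_n` are potentially identical: some counterclockwise permutation composes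
to the identical function. -/
def PotentiallyIdentical {n : ℕ} (f : Fin n → LinFun) : Prop :=
  ∃ σ : Equiv.Perm (Fin n), Counterclockwise f σ ∧ (permComp f σ).IsId

/-- The ε-perturbation `f^{(ε)}` of a linear function. -/
noncomputable def epsPert (f : LinFun) (ε : ℝ) : LinFun := if f.a = 0 then ⟨ε, f.b⟩ else f

-- auxiliary development
namespace LinFun

lemma ext' {g h : LinFun} (h1 : g.a = h.a) (h2 : g.b = h.b) : g = h := by
  cases g; cases h; simp_all

noncomputable instance : DecidableEq LinFun := fun g h =>
  decidable_of_iff (g.a = h.a ∧ g.b = h.b) ⟨fun ⟨x, y⟩ => ext' x y, fun e => by subst e; exact ⟨rfl, rfl⟩⟩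

lemma comp_assoc (x y z : LinFun) : (x.comp y).comp z = x.comp (y.comp z) := by
  refine ext' ?_ ?_ <;> simp [comp] <;> ring

lemma comp_idf (g : LinFun) : g.comp idf = g := by refine ext' ?_ ?_ <;> simp [comp, idf]
lemma idf_comp (g : LinFun) : idf.comp g = g := by refine ext' ?_ ?_ <;> simp [comp, idf]

lemma swap_id {A B : LinFun} (h : A.comp B = idf) : B.comp A = idf := by
  have h1 : A.a * B.a = 1 := congrArg LinFun.a h
  have h2 : A.a * B.b + A.b = 0 := congrArg LinFun.b h
  refine ext' ?_ ?_
  · show B.a * A.a = 1; linear_combination h1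
  · show B.a * A.b + B.b = 0; linear_combination (-B.b) * h1 + B.a * h2

lemma vec_ne_zero {g : LinFun} (hg : g ≠ idf) : (⟨g.b, 1 - g.a⟩ : ℂ) ≠ 0 := by
  intro h
  rw [Complex.ext_iff] at h
  obtain ⟨h1, h2⟩ := h
  simp only [Complex.zero_re, Complex.zero_im] at h1 h2
  exact hg (ext' (by simp [idf]; linarith) (by simpa [idf] using h1))

lemma arg_eq_of_theta_eq {g h : LinFun} (ht : g.theta = h.theta) :
    Complex.arg ⟨g.b, 1 - g.a⟩ = Complex.arg ⟨h.b, 1 - h.a⟩ := by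
  unfold theta at ht
  have hx1 := Complex.neg_pi_lt_arg (⟨g.b, 1 - g.a⟩ : ℂ)
  have hx2 := Complex.arg_le_pi (⟨g.b, 1 - g.a⟩ : ℂ)
  have hy1 := Complex.neg_pi_lt_arg (⟨h.b, 1 - h.a⟩ : ℂ)
  have hy2 := Complex.arg_le_pi (⟨h.b, 1 - h.a⟩ : ℂ)
  have hpi := Real.pi_pos
  split_ifs at ht <;> linarith

lemma commute_of_theta_eq {g h : LinFun} (hg : g ≠ idf) (hh : h ≠ idf)
    (ht : g.theta = h.theta) : g.comp h = h.comp g := by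
  have harg := arg_eq_of_theta_eq ht
  rw [Complex.arg_eq_arg_iff (vec_ne_zero hg) (vec_ne_zero hh)] at harg
  set t : ℝ := ‖(⟨h.b, 1 - h.a⟩ : ℂ)‖ / ‖(⟨g.b, 1 - g.a⟩ : ℂ)‖ with hts
  rw [← Complex.ofReal_div, ← hts] at harg
  have hre : t * g.b = h.b := by
    have := congrArg Complex.re harg
    simpa [Complex.mul_re] using this
  have him : t * (1 - g.a) = 1 - h.a := by
    have := congrArg Complex.im harg
    simpa [Complex.mul_im] using this
  refine ext' ?_ ?_
  · show g.a * h.a = h.a * g.a; ring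
  · show g.a * h.b + g.b = h.a * g.b + h.b
    linear_combination (1 - g.a) * hre - g.b * him

end LinFun

lemma foldl_comp (L : List LinFun) : ∀ acc : LinFun,
    L.foldl (fun acc g => g.comp acc) acc = (compList L).comp acc := by
  induction L with
  | nil => intro acc; simp [compList, LinFun.idf_comp]
  | cons g T ih =>
    intro acc
    show T.foldl _ (g.comp acc) = (compList (g :: T)).comp acc
    have h2 : compList (g :: T) = (compList T).comp g := by
      show T.foldl _ (g.comp LinFun.idf) = _
      rw [ih, LinFun.comp_idf]
    rw [ih, h2, LinFun.comp_assoc]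

lemma compList_cons (g : LinFun) (T : List LinFun) :
    compList (g :: T) = (compList T).comp g := by
  show T.foldl _ (g.comp LinFun.idf) = _
  rw [foldl_comp, LinFun.comp_idf]

lemma compList_append (A B : List LinFun) :
    compList (A ++ B) = (compList B).comp (compList A) := by
  show (A ++ B).foldl _ LinFun.idf = _
  rw [List.foldl_append, foldl_comp]
  rfl

lemma commute_compList (g : LinFun) (A : List LinFun)
    (h : ∀ x ∈ A, g.comp x = x.comp g) : g.comp (compList A) = (compList A).comp g := by
  induction A with
  | nil => simp [compList, LinFun.comp_idf, LinFun.idf_comp]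
  | cons a T ih =>
    rw [compList_cons]
    have ha := h a (List.mem_cons_self (a := a) (l := T))
    have ih' := ih (fun x hx => h x (List.mem_cons_of_mem a hx))
    calc g.comp ((compList T).comp a) = (g.comp (compList T)).comp a := (LinFun.comp_assoc _ _ _).symm
      _ = ((compList T).comp g).comp a := by rw [ih']
      _ = (compList T).comp (g.comp a) := LinFun.comp_assoc _ _ _
      _ = (compList T).comp (a.comp g) := by rw [ha]
      _ = ((compList T).comp a).comp g := (LinFun.comp_assoc _ _ _).symm

def Rccw (g h : LinFun) : Prop := g = LinFun.idf ∨ h = LinFun.idf ∨ g.theta ≤ h.theta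

lemma compList_eq_of_perm_pairwise : ∀ L₁ L₂ : List LinFun, L₁.Perm L₂ →
    L₁.Pairwise Rccw → L₂.Pairwise Rccw → compList L₁ = compList L₂ := by
  intro L₁
  induction L₁ with
  | nil =>
    intro L₂ hp _ _
    rw [hp.symm.eq_nil]
  | cons g T₁ ih =>
    intro L₂ hp h1 h2
    have hg : g ∈ L₂ := hp.subset (List.mem_cons_self (a := g) (l := T₁))
    obtain ⟨A, B, -, hL2, -⟩ := List.exists_erase_eq hg
    subst hL2
    have hT : T₁.Perm (A ++ B) :=
      (List.perm_cons g).mp (hp.trans List.perm_middle)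
    have h2' : (A ++ B).Pairwise Rccw :=
      h2.sublist ((List.sublist_cons_self g B).append_left A)
    have hcomm : ∀ x ∈ A, g.comp x = x.comp g := by
      intro x hx
      have hRxg : Rccw x g :=
        (List.pairwise_append.mp h2).2.2 x hx g (List.mem_cons_self (a := g) (l := B))
      have hRgx : Rccw g x := by
        have hxT : x ∈ T₁ := hT.symm.subset (List.mem_append_left _ hx)
        exact (List.pairwise_cons.mp h1).1 x hxT
      by_cases hgi : g = LinFun.idf
      · rw [hgi, LinFun.idf_comp, LinFun.comp_idf]
      by_cases hxi : x = LinFun.idf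
      · rw [hxi, LinFun.idf_comp, LinFun.comp_idf]
      have t1 : x.theta ≤ g.theta := by
        rcases hRxg with h | h | h
        exacts [absurd h hxi, absurd h hgi, h]
      have t2 : g.theta ≤ x.theta := by
        rcases hRgx with h | h | h
        exacts [absurd h hgi, absurd h hxi, h]
      exact LinFun.commute_of_theta_eq hgi hxi (le_antisymm t2 t1)
    have key : compList (A ++ g :: B) = (compList (A ++ B)).comp g := by
      rw [compList_append, compList_cons, compList_append]
      rw [LinFun.comp_assoc, commute_compList g A hcomm, ← LinFun.comp_assoc]
    rw [compList_cons, key, ih (A ++ B) hT (List.pairwise_cons.mp h1).2 h2']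

lemma ccw_pairwise {n : ℕ} (f : Fin n → LinFun) (σ : Equiv.Perm (Fin n))
    (h : Counterclockwise f σ) :
    ∃ k, ((permList f σ).drop k ++ (permList f σ).take k).Pairwise Rccw := by
  obtain ⟨c, hc⟩ := h
  have hlen : (permList f σ).length = n := by simp [permList]
  refine ⟨min c n, ?_⟩
  have key : ∀ (p q : ℕ) (hp : p < n) (hq : q < n),
      ((c ≤ p ∧ p ≤ q) ∨ (p ≤ q ∧ q < c) ∨ (c ≤ p ∧ q < c)) →
      Rccw ((permList f σ)[p]'(by omega)) ((permList f σ)[q]'(by omega)) := by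
    intro p q hp hq hpat
    have hgp : (permList f σ)[p]'(by omega) = f (σ ⟨p, hp⟩) := by simp [permList]
    have hgq : (permList f σ)[q]'(by omega) = f (σ ⟨q, hq⟩) := by simp [permList]
    rw [hgp, hgq]
    by_cases h1 : f (σ ⟨p, hp⟩) = LinFun.idf
    · exact Or.inl h1
    by_cases h2 : f (σ ⟨q, hq⟩) = LinFun.idf
    · exact Or.inr (Or.inl h2)
    refine Or.inr (Or.inr (hc ⟨p, hp⟩ ⟨q, hq⟩ h1 h2 ?_))
    simpa [Fin.mk_le_mk] using hpat
  rw [List.pairwise_append]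
  refine ⟨?_, ?_, ?_⟩
  · rw [List.pairwise_iff_getElem]
    intro i j hi hj hij
    rw [List.length_drop, hlen] at hi hj
    rw [List.getElem_drop, List.getElem_drop]
    exact key _ _ (by omega) (by omega) (Or.inl ⟨by omega, by omega⟩)
  · rw [List.pairwise_iff_getElem]
    intro i j hi hj hij
    rw [List.length_take, hlen] at hi hj
    rw [List.getElem_take, List.getElem_take]
    exact key _ _ (by omega) (by omega) (Or.inr (Or.inl ⟨by omega, by omega⟩))
  · intro x hx y hy
    obtain ⟨i, hi, hxe⟩ := List.getElem_of_mem hx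
    obtain ⟨j, hj, hye⟩ := List.getElem_of_mem hy
    rw [List.length_drop, hlen] at hi
    rw [List.length_take, hlen] at hj
    rw [← hxe, ← hye, List.getElem_drop, List.getElem_take]
    exact key _ _ (by omega) (by omega) (Or.inr (Or.inr ⟨by omega, by omega⟩))

lemma permList_perm {n : ℕ} (f : Fin n → LinFun) (σ μ : Equiv.Perm (Fin n)) :
    (permList f σ).Perm (permList f μ) := by
  have base : ∀ τ : Equiv.Perm (Fin n), (permList f τ).Perm (List.ofFn f) := by
    intro τ
    rw [permList, List.ofFn_eq_map, List.ofFn_eq_map]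
    have h1 : ((List.finRange n).map τ).Perm (List.finRange n) := by
      refine List.perm_of_nodup_nodup_toFinset_eq
        ((List.nodup_finRange n).map τ.injective) (List.nodup_finRange n) ?_
      ext x
      simp only [List.mem_toFinset, List.mem_map, List.mem_finRange, true_and, iff_true]
      exact ⟨τ.symm x, τ.apply_symm_apply x⟩
    have h2 := h1.map f
    rw [List.map_map] at h2
    exact h2
  exact (base σ).trans (base μ).symm


/-- if some counterclockwise permutation composes to the identity, every
counterclockwise permutation does. -/
theorem stmt9 {n : ℕ} (f : Fin n → LinFun) (hf : ∀ i, 0 < (f i).a)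
    (σ : Equiv.Perm (Fin n)) (hccw : Counterclockwise f σ)
    (hid : (permComp f σ).IsId) :
    ∀ μ : Equiv.Perm (Fin n), Counterclockwise f μ → (permComp f μ).IsId := by
  intro μ hccwμ
  obtain ⟨kσ, hpσ⟩ := ccw_pairwise f σ hccw
  obtain ⟨kμ, hpμ⟩ := ccw_pairwise f μ hccwμ
  have e1 : compList ((permList f σ).take kσ ++ (permList f σ).drop kσ) = LinFun.idf := by
    rw [List.take_append_drop]; exact hid
  have e2 : compList ((permList f σ).drop kσ ++ (permList f σ).take kσ) = LinFun.idf := by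
    rw [compList_append] at e1 ⊢
    exact LinFun.swap_id e1
  have hperm : ((permList f σ).drop kσ ++ (permList f σ).take kσ).Perm
      ((permList f μ).drop kμ ++ (permList f μ).take kμ) := by
    refine List.perm_append_comm.trans (List.Perm.trans ?_ List.perm_append_comm.symm)
    rw [List.take_append_drop, List.take_append_drop]
    exact permList_perm f σ μ
  have e3 : compList ((permList f μ).drop kμ ++ (permList f μ).take kμ) = LinFun.idf := by
    rw [← compList_eq_of_perm_pairwise _ _ hperm hpσ hpμ]
    exact e2
  rw [compList_append] at e3
  have e4 := LinFun.swap_id e3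
  rw [← compList_append, List.take_append_drop] at e4
  exact e4
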